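/- arXiv:2007.12338 — 3 statements merged into one kernel-verified Lean document; each statement's English description precedes it below -/
import Mathlib

section
/- Let (X₁,…,Xₙ) be an exchangeable random vector whose common marginal distribution F has finite first moment, let ρ be a risk measure consistent with convex order defined on finite-mean Borel probability measures on ℝ, and let 𝛄 = (γ₁,…,γₙ) and 𝛌 = (λ₁,…,λₙ) be vectors of nonnegative reals summing to 1 with 𝛄 ≺ 𝛌 (majorization). Then ρ(law of ∑ᵢγᵢXᵢ) ≤ ρ(law of ∑ᵢλᵢXᵢ). -/
open MeasureTheory
open scoped ENNReal BigOperators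

noncomputable section

/-- The `f`-aggregation set: laws of `f (X₁,…,Xₙ)` over all couplings with marginals `F`. -/
def aggSetF (n : ℕ) (f : (Fin n → ℝ) → ℝ) (F : Fin n → Measure ℝ) : Set (Measure ℝ) :=
  {H | ∃ μ : Measure (Fin n → ℝ), IsProbabilityMeasure μ ∧
    (∀ i, μ.map (fun x => x i) = F i) ∧ H = μ.map f}

/-- The aggregation set for sums. -/
def aggSet (n : ℕ) (F : Fin n → Measure ℝ) : Set (Measure ℝ) :=
  aggSetF n (fun x => ∑ i, x i) F

/-- A symmetric function on `ℝⁿ`. -/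
def IsSymmetricFn (n : ℕ) (f : (Fin n → ℝ) → ℝ) : Prop :=
  ∀ (π : Equiv.Perm (Fin n)) (x : Fin n → ℝ), f (x ∘ π) = f x

/-- Left-continuous quantile function of a measure on ℝ. -/
def quantile (F : Measure ℝ) (p : ℝ) : ℝ :=
  sInf {x : ℝ | p ≤ (F (Set.Iic x)).toReal}

/-- The uniform probability measure on (0,1). -/
def uniform01 : Measure ℝ := volume.restrict (Set.Ioo (0 : ℝ) 1)

/-- Comonotonic sum F₁ ⊕ ⋯ ⊕ Fₙ : the law of ∑ Fᵢ⁻¹(U), U uniform on (0,1). -/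
def comonoSum (n : ℕ) (F : Fin n → Measure ℝ) : Measure ℝ :=
  uniform01.map (fun u => ∑ i, quantile (F i) u)

/-- Convex order F ≺cx G. -/
def ConvexOrder (F G : Measure ℝ) : Prop :=
  ∀ φ : ℝ → ℝ, ConvexOn ℝ Set.univ φ → Integrable φ F → Integrable φ G →
    ∫ x, φ x ∂F ≤ ∫ x, φ x ∂G

/-- Stochastic order F ≺st G, i.e. F((-∞,x]) ≥ G((-∞,x]) for all x. -/
def StOrder (F G : Measure ℝ) : Prop :=
  ∀ x : ℝ, G (Set.Iic x) ≤ F (Set.Iic x)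

/-- Doubly stochastic matrix. -/
def DoublyStochastic {n : ℕ} (Λ : Matrix (Fin n) (Fin n) ℝ) : Prop :=
  (∀ i j, 0 ≤ Λ i j) ∧ (∀ i, ∑ j, Λ i j = 1) ∧ (∀ j, ∑ i, Λ i j = 1)

/-- Distribution mixture Λ𝐅 : i-th component is ∑ⱼ Λᵢⱼ Fⱼ. -/
def distMix {n : ℕ} (Λ : Matrix (Fin n) (Fin n) ℝ) (F : Fin n → Measure ℝ) :
    Fin n → Measure ℝ :=
  fun i => ∑ j, ENNReal.ofReal (Λ i j) • F j

/-- Quantile mixture Λ⊗𝐅 : i-th component is the law of ∑ⱼ Λᵢⱼ Fⱼ⁻¹(U). -/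
def quantileMix {n : ℕ} (Λ : Matrix (Fin n) (Fin n) ℝ) (F : Fin n → Measure ℝ) :
    Fin n → Measure ℝ :=
  fun i => uniform01.map (fun u => ∑ j, Λ i j * quantile (F j) u)

/-- Worst-case value of a risk measure over the aggregation set, valued in EReal. -/
def worstCase (ρ : Measure ℝ → ℝ) (n : ℕ) (F : Fin n → Measure ℝ) : EReal :=
  sSup ((fun H => ((ρ H : ℝ) : EReal)) '' aggSet n F)

/-- Worst-case Value-at-Risk over the aggregation set, valued in EReal. -/
def worstVaR (p : ℝ) (n : ℕ) (F : Fin n → Measure ℝ) : EReal :=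
  sSup ((fun G => ((quantile G p : ℝ) : EReal)) '' aggSet n F)

/-- The class M_D of distributions with a nonincreasing density on an interval support. -/
def MemMD (F : Measure ℝ) : Prop :=
  ∃ f : ℝ → ℝ, Measurable f ∧ (∀ x, 0 ≤ f x) ∧
    F = volume.withDensity (fun x => ENNReal.ofReal (f x)) ∧
    ∃ s : Set ℝ, s.OrdConnected ∧ (∀ x, x ∉ s → f x = 0) ∧
      (∀ x ∈ s, ∀ y ∈ s, x ≤ y → f y ≤ f x)

/-- The class M_I of distributions with a nondecreasing density on an interval support. -/
def MemMI (F : Measure ℝ) : Prop :=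
  ∃ f : ℝ → ℝ, Measurable f ∧ (∀ x, 0 ≤ f x) ∧
    F = volume.withDensity (fun x => ENNReal.ofReal (f x)) ∧
    ∃ s : Set ℝ, s.OrdConnected ∧ (∀ x, x ∉ s → f x = 0) ∧
      (∀ x ∈ s, ∀ y ∈ s, x ≤ y → f x ≤ f y)

/-- Pareto(α, θ) distribution, via its Lebesgue density α θ^α x^{-(α+1)} on [θ, ∞). -/
def pareto (α θ : ℝ) : Measure ℝ :=
  volume.withDensity
    (fun x => if θ ≤ x then ENNReal.ofReal (α * θ ^ α / x ^ (α + 1)) else 0)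

/-- A monotone risk measure (w.r.t. stochastic order, on probability measures). -/
def MonotoneRisk (ρ : Measure ℝ → ℝ) : Prop :=
  ∀ F G : Measure ℝ, IsProbabilityMeasure F → IsProbabilityMeasure G →
    StOrder F G → ρ F ≤ ρ G

/-- A risk measure consistent with convex order (on finite-mean probability measures). -/
def CxConsistentRisk (ρ : Measure ℝ → ℝ) : Prop :=
  ∀ F G : Measure ℝ, IsProbabilityMeasure F → IsProbabilityMeasure G →
    Integrable id F → Integrable id G → ConvexOrder F G → ρ F ≤ ρ G

/-- Uniform distribution on [a,b]. -/
def unifOn (a b : ℝ) : Measure ℝ :=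
  (ENNReal.ofReal (b - a))⁻¹ • volume.restrict (Set.Icc a b)

/-- Bernoulli distribution with parameter p, as a measure on ℝ. -/
def bern (p : ℝ) : Measure ℝ :=
  ENNReal.ofReal (1 - p) • Measure.dirac (0 : ℝ) + ENNReal.ofReal p • Measure.dirac (1 : ℝ)

/-- The set C(𝐅) of finite-mean distributions dominated by the comonotonic sum in convex order. -/
def CSet (n : ℕ) (F : Fin n → Measure ℝ) : Set (Measure ℝ) :=
  {G | IsProbabilityMeasure G ∧ Integrable id G ∧ ConvexOrder G (comonoSum n F)}


/-- Proposition 7.1(i): for an exchangeable vector and a convex-order consistent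
    risk measure, a more diversified portfolio has smaller risk. -/
theorem stmt16 (n : ℕ) {Ω : Type} [MeasurableSpace Ω]
    (P : Measure Ω) [IsProbabilityMeasure P]
    (X : Fin n → Ω → ℝ) (hX : ∀ i, Measurable (X i))
    (hexch : ∀ π : Equiv.Perm (Fin n),
      P.map (fun ω => fun i => X (π i) ω) = P.map (fun ω => fun i => X i ω))
    (F : Measure ℝ) (hmarg : ∀ i, P.map (X i) = F) (hFint : Integrable id F)
    (ρ : Measure ℝ → ℝ) (hρ : CxConsistentRisk ρ)
    (g l : Fin n → ℝ) (hg : ∀ i, 0 ≤ g i) (hl : ∀ i, 0 ≤ l i)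
    (hgs : ∑ i, g i = 1) (hls : ∑ i, l i = 1)
    (hmaj : ∃ Λ : Matrix (Fin n) (Fin n) ℝ,
      DoublyStochastic Λ ∧ ∀ i, g i = ∑ j, Λ i j * l j) :
    ρ (P.map (fun ω => ∑ i, g i * X i ω)) ≤ ρ (P.map (fun ω => ∑ i, l i * X i ω)) := by
  classical
  obtain ⟨Λ, ⟨hΛ0, hΛr, hΛc⟩, hgΛ⟩ := hmaj
  have hΛmem : Λ ∈ doublyStochastic ℝ (Fin n) := by
    rw [mem_doublyStochastic_iff_sum]; exact ⟨hΛ0, hΛr, hΛc⟩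
  obtain ⟨w, hw0, hw1, hwΛ⟩ := exists_eq_sum_perm_of_mem_doublyStochastic hΛmem
  have hΛij : ∀ i j, Λ i j = ∑ σ : Equiv.Perm (Fin n), w σ * (if σ i = j then 1 else 0) := by
    intro i j
    rw [← hwΛ]
    simp [Matrix.sum_apply, Matrix.smul_apply, Equiv.Perm.permMatrix,
      PEquiv.toMatrix_apply, Equiv.toPEquiv_apply, mul_ite, eq_comm]
  have hg' : ∀ i, g i = ∑ σ : Equiv.Perm (Fin n), w σ * l (σ i) := by
    intro i
    rw [hgΛ i]
    simp only [hΛij, Finset.sum_mul, ite_mul, one_mul, zero_mul, mul_ite, mul_zero]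
    rw [Finset.sum_comm]
    simp
  set Sg : Ω → ℝ := fun ω => ∑ i, g i * X i ω with hSgdef
  set Sl : Ω → ℝ := fun ω => ∑ i, l i * X i ω with hSldef
  have hSg : Measurable Sg := Finset.measurable_sum _ (fun i _ => (hX i).const_mul _)
  have hSl : Measurable Sl := Finset.measurable_sum _ (fun i _ => (hX i).const_mul _)
  have hXint : ∀ i, Integrable (X i) P := by
    intro i
    have h := hFint
    rw [← hmarg i, integrable_map_measure aestronglyMeasurable_id (hX i).aemeasurable] at h
    exact h
  have hSgint : Integrable Sg P := integrable_finset_sum _ (fun i _ => (hXint i).const_mul _)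
  have hSlint : Integrable Sl P := integrable_finset_sum _ (fun i _ => (hXint i).const_mul _)
  have hPg : IsProbabilityMeasure (P.map Sg) := Measure.isProbabilityMeasure_map hSg.aemeasurable
  have hPl : IsProbabilityMeasure (P.map Sl) := Measure.isProbabilityMeasure_map hSl.aemeasurable
  refine hρ _ _ hPg hPl ?_ ?_ ?_
  · rwa [integrable_map_measure aestronglyMeasurable_id hSg.aemeasurable]
  · rwa [integrable_map_measure aestronglyMeasurable_id hSl.aemeasurable]
  intro φ hφ hφg hφl
  have hφc : Continuous φ := by
    have := hφ.continuousOn isOpen_univ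
    exact continuousOn_univ.mp this
  rw [integral_map hSg.aemeasurable hφc.aestronglyMeasurable,
      integral_map hSl.aemeasurable hφc.aestronglyMeasurable]
  rw [integrable_map_measure hφc.aestronglyMeasurable hSg.aemeasurable] at hφg
  rw [integrable_map_measure hφc.aestronglyMeasurable hSl.aemeasurable] at hφl
  set Y : Equiv.Perm (Fin n) → Ω → ℝ := fun σ ω => ∑ i, l (σ i) * X i ω with hYdef
  set h : (Fin n → ℝ) → ℝ := fun x => φ (∑ i, l i * x i) with hhdef
  have hhc : Continuous h := by
    apply hφc.comp
    exact continuous_finset_sum _ (fun i _ => (continuous_const.mul (continuous_apply i)))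
  have hvec : ∀ π : Equiv.Perm (Fin n), Measurable (fun ω => fun i => X (π i) ω) :=
    fun π => measurable_pi_lambda _ (fun i => hX (π i))
  have hvec1 : Measurable (fun ω => fun i => X i ω) :=
    measurable_pi_lambda _ (fun i => hX i)
  have hYeq : ∀ σ : Equiv.Perm (Fin n), ∀ ω,
      φ (Y σ ω) = h ((fun ω => fun i => X (σ⁻¹ i) ω) ω) := by
    intro σ ω
    simp only [hhdef]
    congr 1
    rw [← Equiv.sum_comp σ (fun i => l i * X (σ⁻¹ i) ω)]
    simp [hYdef]
  have hSleq : ∀ ω, φ (Sl ω) = h ((fun ω => fun i => X i ω) ω) := fun ω => rfl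
  have keyInt : ∀ σ : Equiv.Perm (Fin n), Integrable (fun ω => φ (Y σ ω)) P := by
    intro σ
    have h1 : Integrable h (P.map (fun ω => fun i => X i ω)) := by
      rw [integrable_map_measure hhc.aestronglyMeasurable hvec1.aemeasurable]
      exact hφl
    rw [← hexch σ⁻¹, integrable_map_measure hhc.aestronglyMeasurable (hvec σ⁻¹).aemeasurable] at h1
    have : (fun ω => φ (Y σ ω)) = h ∘ (fun ω => fun i => X (σ⁻¹ i) ω) := funext (hYeq σ)
    rwa [this]
  have keyEq : ∀ σ : Equiv.Perm (Fin n), ∫ ω, φ (Y σ ω) ∂P = ∫ ω, φ (Sl ω) ∂P := by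
    intro σ
    calc ∫ ω, φ (Y σ ω) ∂P = ∫ ω, h ((fun ω => fun i => X (σ⁻¹ i) ω) ω) ∂P := by
          exact integral_congr_ae (Filter.Eventually.of_forall (hYeq σ))
      _ = ∫ x, h x ∂(P.map (fun ω => fun i => X (σ⁻¹ i) ω)) := by
          rw [integral_map (hvec σ⁻¹).aemeasurable hhc.aestronglyMeasurable]
      _ = ∫ x, h x ∂(P.map (fun ω => fun i => X i ω)) := by rw [hexch σ⁻¹]
      _ = ∫ ω, φ (Sl ω) ∂P := by
          rw [integral_map hvec1.aemeasurable hhc.aestronglyMeasurable]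
  have pt : ∀ ω, φ (Sg ω) ≤ ∑ σ : Equiv.Perm (Fin n), w σ * φ (Y σ ω) := by
    intro ω
    have hSgeq : Sg ω = ∑ σ : Equiv.Perm (Fin n), w σ • Y σ ω := by
      simp only [hSgdef, hYdef, smul_eq_mul, Finset.mul_sum]
      rw [Finset.sum_comm]
      refine Finset.sum_congr rfl (fun i _ => ?_)
      rw [hg' i, Finset.sum_mul]
      exact Finset.sum_congr rfl (fun σ _ => by ring)
    rw [hSgeq]
    exact hφ.map_sum_le (fun σ _ => hw0 σ) hw1 (fun σ _ => Set.mem_univ _)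
  calc ∫ ω, φ (Sg ω) ∂P ≤ ∫ ω, ∑ σ : Equiv.Perm (Fin n), w σ * φ (Y σ ω) ∂P := by
        refine integral_mono hφg ?_ pt
        exact integrable_finset_sum _ (fun σ _ => (keyInt σ).const_mul _)
    _ = ∑ σ : Equiv.Perm (Fin n), w σ * ∫ ω, φ (Y σ ω) ∂P := by
        rw [integral_finset_sum _ (fun σ _ => (keyInt σ).const_mul _)]
        exact Finset.sum_congr rfl (fun σ _ => MeasureTheory.integral_const_mul _ _)
    _ = ∑ σ : Equiv.Perm (Fin n), w σ * ∫ ω, φ (Sl ω) ∂P := by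
        exact Finset.sum_congr rfl (fun σ _ => by rw [keyEq σ])
    _ = ∫ ω, φ (Sl ω) ∂P := by rw [← Finset.sum_mul, hw1, one_mul]


end
end

section
/- Let p₁,…,pₙ ∈ [0,1]. There exist random variables X₁,…,Xₙ on a common probability space with Xᵢ distributed Bernoulli(pᵢ) for each i and X₁+⋯+Xₙ almost surely equal to a constant, if and only if ∑ᵢ₌₁ⁿ pᵢ is an integer. (Equivalently, the tuple (B_{p₁},…,B_{pₙ}) is jointly mixable if and only if ∑ᵢpᵢ ∈ ℤ.) -/
open MeasureTheory
open scoped ENNReal BigOperators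

noncomputable section

open Set

lemma uniform01_isProb : IsProbabilityMeasure uniform01 := by
  constructor
  simp [uniform01, Real.volume_Ioo]

def ceilDiff (s q : ℝ) : ℝ → ℝ := fun u => ((⌈s + q - u⌉ - ⌈s - u⌉ : ℤ) : ℝ)

lemma ceilDiff_measurable (s q : ℝ) : Measurable (ceilDiff s q) := by
  apply Measurable.comp (measurable_from_top) ?_
  exact (Int.measurable_ceil.comp (measurable_const.sub measurable_id)).sub
    (Int.measurable_ceil.comp (measurable_const.sub measurable_id))

lemma ceilDiff_mem (s q : ℝ) (h0 : 0 ≤ q) (h1 : q ≤ 1) (u : ℝ) :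
    ceilDiff s q u = 0 ∨ ceilDiff s q u = 1 := by
  have hle : ⌈s - u⌉ ≤ ⌈s + q - u⌉ := Int.ceil_le_ceil (by linarith)
  have hle2 : ⌈s + q - u⌉ ≤ ⌈s - u⌉ + 1 := by
    rw [← Int.ceil_add_one]
    exact Int.ceil_le_ceil (by linarith)
  unfold ceilDiff
  rcases eq_or_lt_of_le hle with h | h
  · left; rw [← h]; push_cast; ring
  · right
    have : ⌈s + q - u⌉ = ⌈s - u⌉ + 1 := le_antisymm hle2 h
    rw [this]; push_cast; ring

lemma ceilDiff_periodic (s q : ℝ) : Function.Periodic (ceilDiff s q) 1 := by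
  intro u
  unfold ceilDiff
  have h1 : s + q - (u + 1) = (s + q - u) - 1 := by ring
  have h2 : s - (u + 1) = (s - u) - 1 := by ring
  rw [h1, h2, Int.ceil_sub_one, Int.ceil_sub_one]
  push_cast; ring

lemma ceilDiff_integral (s q : ℝ) (h0 : 0 ≤ q) (h1 : q ≤ 1) :
    ∫ u in s..(s+1), ceilDiff s q u = q := by
  rw [intervalIntegral.integral_of_le (by linarith : s ≤ s + 1)]
  have hae : ∀ᵐ u ∂(volume.restrict (Ioc s (s+1))),
      ceilDiff s q u = (Ioc s (s+q)).indicator (fun _ => (1:ℝ)) u := by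
    have h2 : ∀ᵐ u : ℝ ∂volume, u ≠ s + q := by
      rw [ae_iff]
      simpa using measure_singleton (s+q)
    have h3 : ∀ᵐ u : ℝ ∂volume, u ≠ s + 1 := by
      rw [ae_iff]
      simpa using measure_singleton (s+1)
    filter_upwards [ae_restrict_mem measurableSet_Ioc, ae_restrict_of_ae h2,
      ae_restrict_of_ae h3] with u hu hne1 hne2
    obtain ⟨hus, hus1⟩ := hu
    have hus1' : u < s + 1 := lt_of_le_of_ne hus1 hne2
    by_cases hcase : u < s + q
    · have hmem : u ∈ Ioc s (s+q) := ⟨hus, le_of_lt hcase⟩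
      rw [indicator_of_mem hmem]
      have hc1 : ⌈s - u⌉ = 0 := by
        rw [Int.ceil_eq_iff]
        constructor <;> push_cast <;> linarith
      have hc2 : ⌈s + q - u⌉ = 1 := by
        rw [Int.ceil_eq_iff]
        constructor <;> push_cast <;> linarith
      simp [ceilDiff, hc1, hc2]
    · have hgt : s + q < u := lt_of_le_of_ne (not_lt.mp hcase) (Ne.symm hne1)
      have hmem : u ∉ Ioc s (s+q) := fun h => absurd h.2 (not_le.mpr hgt)
      rw [indicator_of_notMem hmem]
      have hc1 : ⌈s - u⌉ = 0 := by
        rw [Int.ceil_eq_iff]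
        constructor <;> push_cast <;> linarith
      have hc2 : ⌈s + q - u⌉ = 0 := by
        rw [Int.ceil_eq_iff]
        constructor <;> push_cast <;> linarith
      simp [ceilDiff, hc1, hc2]
  rw [integral_congr_ae hae]
  rw [integral_indicator_const (1:ℝ) measurableSet_Ioc]
  rw [Measure.real, Measure.restrict_apply measurableSet_Ioc]
  rw [Set.Ioc_inter_Ioc]
  simp only [sup_idem, smul_eq_mul, mul_one]
  rw [min_eq_left (by linarith)]
  rw [Real.volume_Ioc, ENNReal.toReal_ofReal (by linarith)]
  ring

lemma map_ceilDiff (s q : ℝ) (h0 : 0 ≤ q) (h1 : q ≤ 1) :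
    uniform01.map (ceilDiff s q) = bern q := by
  have hmeas := ceilDiff_measurable s q
  set A : Set ℝ := ceilDiff s q ⁻¹' {1} with hA_def
  have hA : MeasurableSet A := hmeas (measurableSet_singleton 1)
  have hfun : ceilDiff s q = A.indicator (fun _ => (1:ℝ)) := by
    funext u
    rcases ceilDiff_mem s q h0 h1 u with h | h
    · rw [h, indicator_of_notMem]
      simp only [hA_def, mem_preimage, mem_singleton_iff, h]
      norm_num
    · rw [h, indicator_of_mem]
      simpa [hA_def] using h
  have hint : ∫ u, ceilDiff s q u ∂uniform01 = q := by
    have h01 : (Ioo (0:ℝ) 1) =ᵐ[volume] Ioc (0:ℝ) 1 := Ioo_ae_eq_Ioc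
    calc ∫ u, ceilDiff s q u ∂uniform01
        = ∫ u in Ioc (0:ℝ) 1, ceilDiff s q u := by
          rw [uniform01, Measure.restrict_congr_set h01]
      _ = ∫ u in (0:ℝ)..1, ceilDiff s q u := by
          rw [intervalIntegral.integral_of_le (by norm_num : (0:ℝ) ≤ 1)]
      _ = ∫ u in s..(s+1), ceilDiff s q u := by
          have := (ceilDiff_periodic s q).intervalIntegral_add_eq 0 s
          simpa using this
      _ = q := ceilDiff_integral s q h0 h1
  have hAval : uniform01 A = ENNReal.ofReal q := by
    have h1' : ∫ u, ceilDiff s q u ∂uniform01 = (uniform01 A).toReal := by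
      rw [hfun, integral_indicator_const (1:ℝ) hA, smul_eq_mul, mul_one, Measure.real]
    have hfin : uniform01 A ≠ ⊤ := by
      have := uniform01_isProb
      exact (measure_lt_top uniform01 A).ne
    rw [h1'] at hint
    rw [← hint, ENNReal.ofReal_toReal hfin]
  have := uniform01_isProb
  have hAc : uniform01 Aᶜ = ENNReal.ofReal (1 - q) := by
    rw [measure_compl hA (measure_lt_top uniform01 A).ne, hAval, measure_univ]
    rw [ENNReal.ofReal_sub 1 h0, ENNReal.ofReal_one]
  ext T hT
  rw [Measure.map_apply hmeas hT]
  simp only [bern, Measure.coe_add, Measure.coe_smul, Pi.add_apply, Pi.smul_apply,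
    smul_eq_mul, Measure.dirac_apply' _ hT]
  by_cases h0T : (0:ℝ) ∈ T <;> by_cases h1T : (1:ℝ) ∈ T
  · have hpre : ceilDiff s q ⁻¹' T = univ := by
      ext u
      simp only [mem_preimage, mem_univ, iff_true]
      rcases ceilDiff_mem s q h0 h1 u with h | h <;> rw [h] <;> assumption
    rw [hpre, measure_univ, indicator_of_mem h0T, indicator_of_mem h1T]
    simp only [Pi.one_apply, mul_one]
    rw [← ENNReal.ofReal_add (by linarith) h0]
    norm_num
  · have hpre : ceilDiff s q ⁻¹' T = Aᶜ := by
      ext u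
      simp only [mem_preimage, mem_compl_iff, hA_def, mem_singleton_iff]
      rcases ceilDiff_mem s q h0 h1 u with h | h <;> rw [h]
      · simp only [h0T, iff_true]; norm_num
      · simp [h1T]
    rw [hpre, hAc, indicator_of_mem h0T, indicator_of_notMem h1T]
    simp
  · have hpre : ceilDiff s q ⁻¹' T = A := by
      ext u
      simp only [mem_preimage, hA_def, mem_singleton_iff]
      rcases ceilDiff_mem s q h0 h1 u with h | h <;> rw [h]
      · simp only [h0T, false_iff]; norm_num
      · simp [h1T]
    rw [hpre, hAval, indicator_of_notMem h0T, indicator_of_mem h1T]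
    simp
  · have hpre : ceilDiff s q ⁻¹' T = ∅ := by
      ext u
      simp only [mem_preimage, mem_empty_iff_false, iff_false]
      rcases ceilDiff_mem s q h0 h1 u with h | h <;> rw [h] <;> assumption
    rw [hpre, measure_empty, indicator_of_notMem h0T, indicator_of_notMem h1T]
    simp

lemma integrable_id_dirac (a : ℝ) : Integrable (fun x : ℝ => x) (Measure.dirac a) := by
  refine ⟨measurable_id.aestronglyMeasurable, ?_⟩
  rw [HasFiniteIntegral, lintegral_dirac]
  exact ENNReal.coe_lt_top

lemma bern_integral {p : ℝ} (h0 : 0 ≤ p) (h1 : p ≤ 1) : ∫ x, x ∂(bern p) = p := by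
  have hi0 : Integrable (fun x : ℝ => x) (ENNReal.ofReal (1-p) • Measure.dirac (0:ℝ)) :=
    (integrable_id_dirac 0).smul_measure ENNReal.ofReal_ne_top
  have hi1 : Integrable (fun x : ℝ => x) (ENNReal.ofReal p • Measure.dirac (1:ℝ)) :=
    (integrable_id_dirac 1).smul_measure ENNReal.ofReal_ne_top
  rw [bern, integral_add_measure hi0 hi1, integral_smul_measure, integral_smul_measure,
    integral_dirac, integral_dirac, ENNReal.toReal_ofReal h0,
    ENNReal.toReal_ofReal (by linarith : (0:ℝ) ≤ 1 - p)]
  simp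


/-- Proposition 8.1: (B_{p₁},…,B_{pₙ}) is jointly mixable iff ∑ pᵢ ∈ ℤ. -/
theorem stmt17 (n : ℕ) (p : Fin n → ℝ) (hp : ∀ i, p i ∈ Set.Icc (0 : ℝ) 1) :
    (∃ c : ℝ, Measure.dirac c ∈ aggSet n (fun i => bern (p i))) ↔
      ∃ k : ℤ, (∑ i, p i) = (k : ℝ) := by
  constructor
  · rintro ⟨c, μ, hμ, hmarg, hmap⟩
    have hsum_meas : Measurable fun x : Fin n → ℝ => ∑ i, x i :=
      Finset.measurable_sum _ (fun i _ => measurable_pi_apply i)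
    have h01 : ∀ i, μ {x | x i ≠ 0 ∧ x i ≠ 1} = 0 := by
      intro i
      have heq : {x : Fin n → ℝ | x i ≠ 0 ∧ x i ≠ 1}
          = (fun x : Fin n → ℝ => x i) ⁻¹' ({0, 1} : Set ℝ)ᶜ := by
        ext x; simp [mem_compl_iff]
      rw [heq, ← Measure.map_apply (measurable_pi_apply i)
        ((measurableSet_insert.mpr (measurableSet_singleton 1)).compl), hmarg i]
      simp [bern, Measure.dirac_apply]
    have hc : μ {x | (∑ i, x i) ≠ c} = 0 := by
      have heq : {x : Fin n → ℝ | (∑ i, x i) ≠ c}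
          = (fun x : Fin n → ℝ => ∑ i, x i) ⁻¹' ({c} : Set ℝ)ᶜ := by
        ext x; simp
      rw [heq, ← Measure.map_apply hsum_meas (measurableSet_singleton c).compl, ← hmap]
      simp [Measure.dirac_apply]
    have hbad : μ ({x : Fin n → ℝ | (∑ i, x i) ≠ c}
        ∪ ⋃ i, {x | x i ≠ 0 ∧ x i ≠ 1}) = 0 :=
      measure_union_null hc (measure_iUnion_null h01)
    have hgood : ∃ x : Fin n → ℝ, (∑ i, x i) = c ∧ ∀ i, x i = 0 ∨ x i = 1 := by
      by_contra hcon
      push_neg at hcon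
      have huniv : ({x : Fin n → ℝ | (∑ i, x i) ≠ c}
          ∪ ⋃ i, {x | x i ≠ 0 ∧ x i ≠ 1}) = univ := by
        ext x
        simp only [mem_univ, iff_true, mem_union, mem_setOf_eq, mem_iUnion]
        by_cases hxc : (∑ i, x i) = c
        · obtain ⟨i, hi0, hi1⟩ := by
            have := hcon x hxc
            exact this
          exact Or.inr ⟨i, hi0, hi1⟩
        · exact Or.inl hxc
      rw [huniv, measure_univ] at hbad
      exact one_ne_zero hbad
    obtain ⟨x, hxc, hxi⟩ := hgood
    have hcint : ∃ k : ℤ, c = (k : ℝ) := by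
      refine ⟨∑ i, if x i = 1 then 1 else 0, ?_⟩
      rw [← hxc]
      push_cast
      refine Finset.sum_congr rfl fun i _ => ?_
      rcases hxi i with h | h <;> simp [h]
    have hInt : ∀ i, Integrable (fun x : Fin n → ℝ => x i) μ := by
      intro i
      refine Integrable.mono' (integrable_const 1)
        (measurable_pi_apply i).aestronglyMeasurable ?_
      have h01' := h01 i
      rw [← compl_compl {x : Fin n → ℝ | x i ≠ 0 ∧ x i ≠ 1}] at h01'
      filter_upwards [(ae_iff.mpr h01' :
        ∀ᵐ y ∂μ, y ∈ {x : Fin n → ℝ | x i ≠ 0 ∧ x i ≠ 1}ᶜ)] with y hy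
      simp only [mem_compl_iff, mem_setOf_eq, not_and_or, not_not] at hy
      rcases hy with h | h <;> rw [Real.norm_eq_abs, h] <;> norm_num
    have hEi : ∀ i, ∫ y, y i ∂μ = p i := by
      intro i
      have hmp := integral_map (f := fun y : ℝ => y) (φ := fun x : Fin n → ℝ => x i)
        (measurable_pi_apply i).aemeasurable
        (by rw [hmarg i]; exact measurable_id.aestronglyMeasurable)
      rw [hmarg i] at hmp
      rw [← hmp, bern_integral (hp i).1 (hp i).2]
    have hEsum : ∫ y, (∑ i, y i) ∂μ = c := by
      have hmp := integral_map (f := fun y : ℝ => y)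
        (φ := fun x : Fin n → ℝ => ∑ i, x i) hsum_meas.aemeasurable
        (by rw [← hmap]; exact measurable_id.aestronglyMeasurable)
      rw [← hmap] at hmp
      rw [← hmp, integral_dirac]
    have hsum_eq : (∑ i, p i) = c := by
      rw [← hEsum, integral_finset_sum _ (fun i _ => hInt i)]
      exact Finset.sum_congr rfl fun i _ => (hEi i).symm
    obtain ⟨k, hk⟩ := hcint
    exact ⟨k, by rw [hsum_eq, hk]⟩
  · rintro ⟨k, hk⟩
    haveI := uniform01_isProb
    set p' : ℕ → ℝ := fun m => if h : m < n then p ⟨m, h⟩ else 0 with hp'_def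
    set f : ℕ → ℝ := fun m => ∑ j ∈ Finset.range m, p' j with hf_def
    have hp'0 : ∀ m, 0 ≤ p' m := by
      intro m
      by_cases h : m < n
      · simp only [hp'_def, dif_pos h]; exact (hp ⟨m, h⟩).1
      · simp [hp'_def, dif_neg h]
    have hp'1 : ∀ m, p' m ≤ 1 := by
      intro m
      by_cases h : m < n
      · simp only [hp'_def, dif_pos h]; exact (hp ⟨m, h⟩).2
      · simp [hp'_def, dif_neg h]
    have hfn : f n = (k : ℝ) := by
      have hfn' : f n = ∑ j ∈ Finset.range n, p' j := rfl
      rw [hfn', ← hk, ← Fin.sum_univ_eq_sum_range]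
      exact Finset.sum_congr rfl fun i _ => by simp [hp'_def, i.isLt]
    set G : ℝ → (Fin n → ℝ) := fun u i => ceilDiff (f i) (p' i) u with hG_def
    have hGmeas : Measurable G :=
      measurable_pi_lambda _ fun i => ceilDiff_measurable (f i) (p' i)
    refine ⟨(k : ℝ), uniform01.map G, ?_, ?_, ?_⟩
    · exact Measure.isProbabilityMeasure_map hGmeas.aemeasurable
    · intro i
      rw [Measure.map_map (measurable_pi_apply i) hGmeas]
      have hco : (fun x : Fin n → ℝ => x i) ∘ G = ceilDiff (f i) (p' i) := rfl
      rw [hco, map_ceilDiff _ _ (hp'0 i) (hp'1 i)]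
      congr 1
      simp [hp'_def, i.isLt]
    · rw [Measure.map_map (Finset.measurable_sum _ (fun i _ => measurable_pi_apply i))
        hGmeas]
      have hcomp : ((fun x : Fin n → ℝ => ∑ i, x i) ∘ G)
          = fun u => ∑ i : Fin n, ceilDiff (f i) (p' i) u := rfl
      rw [hcomp]
      have hconst : ∀ u ∈ Ioo (0:ℝ) 1,
          (∑ i : Fin n, ceilDiff (f i) (p' i) u) = (k : ℝ) := by
        intro u hu
        have hstep : ∀ m : ℕ, ceilDiff (f m) (p' m) u
            = ((⌈f (m+1) - u⌉ : ℤ) : ℝ) - ((⌈f m - u⌉ : ℤ) : ℝ) := by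
          intro m
          have hsucc : f m + p' m = f (m+1) := by
            rw [hf_def]; exact (Finset.sum_range_succ p' m).symm
          rw [ceilDiff, ← hsucc]
          push_cast
          ring
        rw [Fin.sum_univ_eq_sum_range (fun m => ceilDiff (f m) (p' m) u) n]
        calc ∑ m ∈ Finset.range n, ceilDiff (f m) (p' m) u
            = ∑ m ∈ Finset.range n,
              (((⌈f (m+1) - u⌉ : ℤ) : ℝ) - ((⌈f m - u⌉ : ℤ) : ℝ)) :=
              Finset.sum_congr rfl fun m _ => hstep m
          _ = ((⌈f n - u⌉ : ℤ) : ℝ) - ((⌈f 0 - u⌉ : ℤ) : ℝ) :=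
              Finset.sum_range_sub (fun m => ((⌈f m - u⌉ : ℤ) : ℝ)) n
          _ = (k : ℝ) := by
              have hceil0 : ⌈-u⌉ = (0 : ℤ) := by
                rw [Int.ceil_eq_iff]
                constructor <;> push_cast <;> [linarith [hu.2]; linarith [hu.1]]
              have hf0 : f 0 - u = -u := by simp [hf_def]
              have hfnu : f n - u = -u + (k : ℝ) := by rw [hfn]; ring
              rw [hf0, hfnu, Int.ceil_add_intCast, hceil0]
              push_cast
              ring
      have hae : (fun u => ∑ i : Fin n, ceilDiff (f i) (p' i) u)
          =ᵐ[uniform01] fun _ => (k : ℝ) := by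
        rw [uniform01]
        filter_upwards [ae_restrict_mem measurableSet_Ioo] with u hu
        exact hconst u hu
      rw [Measure.map_congr hae, Measure.map_const, measure_univ, one_smul]


end
end

section
/- Let p ∈ (0,1), α > 1, and 𝛉 = (θ₁,…,θₙ) ∈ (0,∞)ⁿ. Then the worst-case Value-at-Risk for Pareto marginals satisfies (∑ᵢθᵢ)/(1−p)^{1/α} ≤ V̄aR_p(𝐏_{α,𝛉}) ≤ (α/(α−1)) · (∑ᵢθᵢ)/(1−p)^{1/α}. -/
open MeasureTheory
open scoped ENNReal BigOperators

noncomputable section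

section auxstmt19
open Set

lemma pareto_Ioi {α θ t : ℝ} (hα : 0 < α) (hθ : 0 < θ) (ht : θ ≤ t) :
    pareto α θ (Set.Ioi t) = ENNReal.ofReal ((θ / t) ^ α) := by
  have ht0 : 0 < t := hθ.trans_le ht
  rw [pareto, withDensity_apply _ measurableSet_Ioi]
  have h1 : ∀ x ∈ Ioi t, (if θ ≤ x then ENNReal.ofReal (α * θ ^ α / x ^ (α + 1)) else 0)
      = ENNReal.ofReal (α * θ ^ α * x ^ (-(α + 1))) := by
    intro x hx
    have hx0 : 0 < x := ht0.trans hx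
    rw [if_pos (ht.trans hx.le), Real.rpow_neg hx0.le, div_eq_mul_inv]
  rw [setLIntegral_congr_fun measurableSet_Ioi h1]
  have hint : IntegrableOn (fun x : ℝ => α * θ ^ α * x ^ (-(α + 1))) (Ioi t) :=
    (integrableOn_Ioi_rpow_of_lt (by linarith) ht0).const_mul _
  rw [← ofReal_integral_eq_lintegral_ofReal hint]
  · rw [integral_const_mul, integral_Ioi_rpow_of_lt (by linarith) ht0]
    congr 1
    have : -(α + 1) + 1 = -α := by ring
    rw [this, Real.div_rpow hθ.le ht0.le, Real.rpow_neg ht0.le]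
    field_simp
  · filter_upwards [ae_restrict_mem measurableSet_Ioi] with x hx
    have hx0 : 0 < x := ht0.trans hx
    positivity

lemma pareto_Iio {α θ : ℝ} : pareto α θ (Set.Iio θ) = 0 := by
  rw [pareto, withDensity_apply _ measurableSet_Iio]
  rw [setLIntegral_congr_fun measurableSet_Iio
    (fun x (hx : x < θ) => if_neg (not_le.2 hx))]
  simp

lemma pareto_singleton {α θ : ℝ} (x : ℝ) : pareto α θ {x} = 0 :=
  withDensity_absolutelyContinuous volume _ (measure_singleton x)

instance pareto_prob {α θ : ℝ} [Fact (0 < α)] [Fact (0 < θ)] :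
    IsProbabilityMeasure (pareto α θ) := by
  constructor
  have hα : 0 < α := Fact.out
  have hθ : 0 < θ := Fact.out
  have h1 : (Set.univ : Set ℝ) = Iio θ ∪ ({θ} ∪ Ioi θ) := by
    ext x; simp [eq_comm, lt_or_eq_of_le, or_comm, or_assoc, lt_or_ge x θ, le_iff_lt_or_eq]
  have h2 : pareto α θ (Set.Ioi θ) = 1 := by
    rw [pareto_Ioi hα hθ le_rfl, div_self hθ.ne', Real.one_rpow, ENNReal.ofReal_one]
  apply le_antisymm
  · calc pareto α θ Set.univ = pareto α θ (Iio θ ∪ ({θ} ∪ Ioi θ)) := by rw [← h1]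
      _ ≤ pareto α θ (Iio θ) + pareto α θ ({θ} ∪ Ioi θ) := measure_union_le _ _
      _ ≤ pareto α θ (Iio θ) + (pareto α θ {θ} + pareto α θ (Ioi θ)) := by
          gcongr; exact measure_union_le _ _
      _ = 1 := by rw [pareto_Iio, pareto_singleton, h2]; simp
  · rw [← h2]; exact measure_mono (subset_univ _)

lemma pareto_prob' {α θ : ℝ} (hα : 0 < α) (hθ : 0 < θ) :
    IsProbabilityMeasure (pareto α θ) :=
  haveI := Fact.mk hα; haveI := Fact.mk hθ; inferInstance

lemma pareto_Iic {α θ x : ℝ} (hα : 0 < α) (hθ : 0 < θ) (hx : θ ≤ x) :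
    pareto α θ (Set.Iic x) = ENNReal.ofReal (1 - (θ / x) ^ α) := by
  haveI := pareto_prob' hα hθ
  have hx0 : 0 < x := hθ.trans_le hx
  have hc1 : (θ / x) ^ α ≤ 1 :=
    Real.rpow_le_one (by positivity) (div_le_one_of_le₀ hx hx0.le) hα.le
  rw [← compl_Ioi, prob_compl_eq_one_sub measurableSet_Ioi, pareto_Ioi hα hθ hx,
    ENNReal.ofReal_sub _ (by positivity), ENNReal.ofReal_one]

lemma pareto_Iic_zero {α θ x : ℝ} (hx : x < θ) : pareto α θ (Set.Iic x) = 0 :=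
  measure_mono_null (fun y (hy : y ≤ x) => lt_of_le_of_lt hy hx) pareto_Iio



instance uniform01_prob : IsProbabilityMeasure uniform01 := by
  constructor
  rw [uniform01, Measure.restrict_apply_univ, Real.volume_Ioo]
  norm_num

lemma g_measurable (α θ : ℝ) : Measurable (fun u : ℝ => θ / (1 - u) ^ α⁻¹) :=
  measurable_const.div ((measurable_const.sub measurable_id).pow_const _)

lemma rpow_inv_cancel {x α : ℝ} (hx : 0 ≤ x) (hα : α ≠ 0) : (x ^ α⁻¹) ^ α = x := by
  rw [← Real.rpow_mul hx, inv_mul_cancel₀ hα, Real.rpow_one]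

lemma rpow_cancel_inv {x α : ℝ} (hx : 0 ≤ x) (hα : α ≠ 0) : (x ^ α) ^ α⁻¹ = x := by
  rw [← Real.rpow_mul hx, mul_inv_cancel₀ hα, Real.rpow_one]

lemma map_g_eq_pareto {α θ : ℝ} (hα : 1 < α) (hθ : 0 < θ) :
    uniform01.map (fun u : ℝ => θ / (1 - u) ^ α⁻¹) = pareto α θ := by
  have hα0 : 0 < α := by linarith
  haveI := pareto_prob' hα0 hθ
  haveI : IsProbabilityMeasure (uniform01.map (fun u : ℝ => θ / (1 - u) ^ α⁻¹)) :=
    Measure.isProbabilityMeasure_map (g_measurable α θ).aemeasurable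
  refine Measure.ext_of_Iic _ _ (fun x => ?_)
  rw [Measure.map_apply (g_measurable α θ) measurableSet_Iic, uniform01,
    Measure.restrict_apply ((g_measurable α θ) measurableSet_Iic)]
  by_cases hx : θ ≤ x
  · have hx0 : 0 < x := hθ.trans_le hx
    have hc0 : 0 < (θ / x) ^ α := Real.rpow_pos_of_pos (by positivity) _
    have hc1 : (θ / x) ^ α ≤ 1 :=
      Real.rpow_le_one (by positivity) (div_le_one_of_le₀ hx hx0.le) hα0.le
    have hset : (fun u : ℝ => θ / (1 - u) ^ α⁻¹) ⁻¹' Set.Iic x ∩ Set.Ioo 0 1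
        = Set.Ioc 0 (1 - (θ / x) ^ α) := by
      ext u
      simp only [Set.mem_inter_iff, Set.mem_preimage, Set.mem_Iic, Set.mem_Ioo, Set.mem_Ioc]
      constructor
      · rintro ⟨hgu, hu0, hu1⟩
        have h1u : 0 < 1 - u := by linarith
        have hd : 0 < (1 - u) ^ α⁻¹ := Real.rpow_pos_of_pos h1u _
        have h2 : θ / x ≤ (1 - u) ^ α⁻¹ := by
          rw [div_le_iff₀ hx0]
          rw [div_le_iff₀ hd] at hgu
          linarith [hgu]
        have h3 : (θ / x) ^ α ≤ 1 - u := by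
          calc (θ / x) ^ α ≤ ((1 - u) ^ α⁻¹) ^ α :=
                Real.rpow_le_rpow (by positivity) h2 hα0.le
            _ = 1 - u := rpow_inv_cancel h1u.le hα0.ne'
        exact ⟨hu0, by linarith⟩
      · rintro ⟨hu0, huc⟩
        have hu1 : u < 1 := by linarith
        have h1u : 0 < 1 - u := by linarith
        have hd : 0 < (1 - u) ^ α⁻¹ := Real.rpow_pos_of_pos h1u _
        have h2 : θ / x ≤ (1 - u) ^ α⁻¹ := by
          calc θ / x = ((θ / x) ^ α) ^ α⁻¹ := (rpow_cancel_inv (by positivity) hα0.ne').symm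
            _ ≤ (1 - u) ^ α⁻¹ := Real.rpow_le_rpow hc0.le (by linarith) (by positivity)
        refine ⟨?_, hu0, hu1⟩
        rw [div_le_iff₀ hd]
        rw [div_le_iff₀ hx0] at h2
        linarith
    rw [hset, Real.volume_Ioc, pareto_Iic hα0 hθ hx, sub_zero]
  · push_neg at hx
    have hset : (fun u : ℝ => θ / (1 - u) ^ α⁻¹) ⁻¹' Set.Iic x ∩ Set.Ioo 0 1 = ∅ := by
      ext u
      simp only [Set.mem_inter_iff, Set.mem_preimage, Set.mem_Iic, Set.mem_Ioo,
        Set.mem_empty_iff_false, iff_false, not_and, and_imp]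
      intro hgu hu0 hu1
      have h1u : 0 < 1 - u := by linarith
      have hd0 : 0 < (1 - u) ^ α⁻¹ := Real.rpow_pos_of_pos h1u _
      have hd1 : (1 - u) ^ α⁻¹ ≤ 1 :=
        Real.rpow_le_one h1u.le (by linarith) (by positivity)
      have : θ ≤ θ / (1 - u) ^ α⁻¹ := by
        rw [le_div_iff₀ hd0]
        nlinarith
      linarith
    rw [hset, pareto_Iic_zero hx, measure_empty]

lemma quantile_le_of_cdf {G : Measure ℝ} {p B : ℝ} (hB : 0 ≤ B)
    (h : p ≤ (G (Set.Iic B)).toReal) : quantile G p ≤ B := by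
  by_cases hb : BddBelow {x : ℝ | p ≤ (G (Set.Iic x)).toReal}
  · exact csInf_le hb h
  · rw [quantile, csInf_of_not_bddBelow hb, Real.sInf_empty]; exact hB

lemma quantile_pareto_ge {α θ p : ℝ} (hα : 1 < α) (hθ : 0 < θ) (hp : p ∈ Set.Ioo (0:ℝ) 1) :
    θ / (1 - p) ^ (1/α) ≤ quantile (pareto α θ) p := by
  have hα0 : 0 < α := by linarith
  have h1p : 0 < 1 - p := by linarith [hp.2]
  have hq0 : 0 < (1 - p) ^ (1/α) := Real.rpow_pos_of_pos h1p _
  have hq1 : (1 - p) ^ (1/α) ≤ 1 := Real.rpow_le_one h1p.le (by linarith [hp.1]) (by positivity)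
  set L := θ / (1 - p) ^ (1/α) with hL
  have hθL : θ ≤ L := by
    rw [hL, le_div_iff₀ hq0]; nlinarith
  have hqα : ((1 - p) ^ (1/α)) ^ α = 1 - p := by
    rw [one_div]; exact rpow_inv_cancel h1p.le hα0.ne'
  have hmem : p ≤ ((pareto α θ) (Set.Iic L)).toReal := by
    rw [pareto_Iic hα0 hθ hθL, ENNReal.toReal_ofReal]
    · have : θ / L = (1 - p) ^ (1/α) := by
        rw [hL]; field_simp
      rw [this, hqα]; linarith
    · have : θ / L = (1 - p) ^ (1/α) := by rw [hL]; field_simp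
      rw [this, hqα]; linarith [hp.1]
  refine le_csInf ⟨L, hmem⟩ (fun x hx => ?_)
  simp only [Set.mem_setOf_eq] at hx
  by_cases hxθ : θ ≤ x
  · have hx0 : 0 < x := hθ.trans_le hxθ
    rw [pareto_Iic hα0 hθ hxθ, ENNReal.toReal_ofReal (by
      have : (θ / x) ^ α ≤ 1 :=
        Real.rpow_le_one (by positivity) (div_le_one_of_le₀ hxθ hx0.le) hα0.le
      linarith)] at hx
    have h2 : (θ / x) ^ α ≤ 1 - p := by linarith
    have h3 : θ / x ≤ (1 - p) ^ (1/α) := by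
      calc θ / x = ((θ / x) ^ α) ^ α⁻¹ := (rpow_cancel_inv (by positivity) hα0.ne').symm
        _ ≤ ((1 - p) ^ (1/α)) := by
            rw [one_div]
            exact Real.rpow_le_rpow (by positivity) h2 (by positivity)
    rw [hL, div_le_iff₀ hq0]
    rw [div_le_iff₀ hx0] at h3
    linarith
  · exfalso
    push_neg at hxθ
    rw [pareto_Iic_zero hxθ] at hx
    simp at hx
    linarith [hp.1]

lemma pareto_dens_measurable (α θ : ℝ) :
    Measurable (fun x : ℝ => if θ ≤ x then ENNReal.ofReal (α * θ ^ α / x ^ (α + 1)) else 0) := by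
  refine Measurable.ite ?_ ?_ measurable_const
  · exact measurableSet_Ici
  · exact (measurable_const.div (measurable_id.pow_const _)).ennreal_ofReal

lemma pareto_stoploss {α θ t : ℝ} (hα : 1 < α) (hθ : 0 < θ) (ht : θ ≤ t) :
    ∫⁻ y, ENNReal.ofReal (max (y - t) 0) ∂(pareto α θ)
      = ENNReal.ofReal (θ ^ α * t ^ (1 - α) / (α - 1)) := by
  have ht0 : 0 < t := hθ.trans_le ht
  have hgm : Measurable (fun y : ℝ => ENNReal.ofReal (max (y - t) 0)) :=
    ((measurable_id.sub_const t).max measurable_const).ennreal_ofReal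
  rw [pareto, lintegral_withDensity_eq_lintegral_mul _ (pareto_dens_measurable α θ) hgm]
  have hcong : ∀ y : ℝ,
      ((fun x : ℝ => if θ ≤ x then ENNReal.ofReal (α * θ ^ α / x ^ (α + 1)) else 0) *
        fun y : ℝ => ENNReal.ofReal (max (y - t) 0)) y
      = Set.indicator (Set.Ioi t)
          (fun y => ENNReal.ofReal (α * θ ^ α * y ^ (-(α + 1)) * (y - t))) y := by
    intro y
    simp only [Pi.mul_apply]
    by_cases hy : y ∈ Set.Ioi t
    · have hy0 : 0 < y := ht0.trans hy
      rw [Set.indicator_of_mem hy, if_pos (ht.trans hy.le),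
        max_eq_left (by simp only [Set.mem_Ioi] at hy; linarith : (0:ℝ) ≤ y - t),
        ← ENNReal.ofReal_mul (by positivity), Real.rpow_neg hy0.le, div_eq_mul_inv]
    · rw [Set.indicator_of_notMem hy]
      simp only [Set.mem_Ioi, not_lt] at hy
      rw [max_eq_right (by linarith : y - t ≤ 0), ENNReal.ofReal_zero, mul_zero]
  rw [lintegral_congr hcong, lintegral_indicator measurableSet_Ioi]
  have key : ∀ y ∈ Set.Ioi t, α * θ ^ α * y ^ (-(α + 1)) * (y - t)
      = α * θ ^ α * y ^ (-α) - α * θ ^ α * t * y ^ (-α - 1) := by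
    intro y hy
    have hy0 : 0 < y := ht0.trans hy
    have h1 : y ^ (-α : ℝ) = y ^ (-(α + 1)) * y := by
      rw [show (-α : ℝ) = -(α + 1) + 1 by ring, Real.rpow_add_one hy0.ne']
    have h2 : y ^ (-α - 1 : ℝ) = y ^ (-(α + 1)) := by rw [show (-α - 1 : ℝ) = -(α+1) by ring]
    rw [h1, h2]; ring
  have hint2 : IntegrableOn
      (fun y : ℝ => α * θ ^ α * y ^ (-α) - α * θ ^ α * t * y ^ (-α - 1)) (Set.Ioi t) :=
    ((integrableOn_Ioi_rpow_of_lt (by linarith) ht0).const_mul _).sub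
      ((integrableOn_Ioi_rpow_of_lt (by linarith) ht0).const_mul _)
  have hint : IntegrableOn
      (fun y : ℝ => α * θ ^ α * y ^ (-(α + 1)) * (y - t)) (Set.Ioi t) :=
    IntegrableOn.congr_fun hint2 (fun y hy => (key y hy).symm) measurableSet_Ioi
  rw [← ofReal_integral_eq_lintegral_ofReal hint]
  · rw [setIntegral_congr_fun measurableSet_Ioi key, integral_sub
      ((integrableOn_Ioi_rpow_of_lt (by linarith) ht0).const_mul _)
      ((integrableOn_Ioi_rpow_of_lt (by linarith) ht0).const_mul _),
      integral_const_mul, integral_const_mul,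
      integral_Ioi_rpow_of_lt (by linarith) ht0, integral_Ioi_rpow_of_lt (by linarith) ht0]
    congr 1
    have e3 : t ^ (1 - α : ℝ) = t * t ^ (-α : ℝ) := by
      rw [show (1 - α : ℝ) = -α + 1 by ring, Real.rpow_add_one ht0.ne']; ring
    rw [show (-α + 1 : ℝ) = (1 - α : ℝ) by ring, show (-α - 1 + 1 : ℝ) = (-α : ℝ) by ring, e3]
    have hα1 : (1 : ℝ) - α ≠ 0 := by intro h; exact absurd (by linarith : α = 1) (by linarith)
    have hα2 : (α : ℝ) - 1 ≠ 0 := by intro h; exact absurd (by linarith : α = 1) (by linarith)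
    have hα3 : (α : ℝ) ≠ 0 := by linarith
    field_simp
    ring
  · filter_upwards [ae_restrict_mem measurableSet_Ioi] with y hy
    have hy0 : 0 < y := ht0.trans hy
    have : (0:ℝ) < y - t := by simpa using hy
    positivity

lemma c_eq {α θ p : ℝ} (hα : 1 < α) (hθ : 0 < θ) (hp0 : 0 < p) (hp1 : p < 1) :
    θ ^ α * (θ / (1 - p) ^ (1/α)) ^ (1 - α) / (α - 1)
      = θ * (1 - p) / ((1 - p) ^ (1/α) * (α - 1)) := by
  have h1p : 0 < 1 - p := by linarith
  set q := (1 - p) ^ (1/α) with hq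
  have hq0 : 0 < q := Real.rpow_pos_of_pos h1p _
  have hqα : q ^ α = 1 - p := by rw [hq, one_div]; exact rpow_inv_cancel h1p.le (by linarith)
  have h1 : (θ / q) ^ (1 - α : ℝ) = θ ^ (1 - α : ℝ) / q ^ (1 - α : ℝ) :=
    Real.div_rpow hθ.le hq0.le _
  have h2 : θ ^ (α : ℝ) * θ ^ (1 - α : ℝ) = θ := by
    rw [← Real.rpow_add hθ]; norm_num
  have h3 : q ^ (1 - α : ℝ) = q / (1 - p) := by
    rw [show (1 - α : ℝ) = 1 + -α by ring, Real.rpow_add hq0, Real.rpow_one,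
      Real.rpow_neg hq0.le, hqα, div_eq_mul_inv]
  rw [h1, h3]
  have hα2 : (α : ℝ) - 1 ≠ 0 := by intro h; exact absurd (by linarith : α = 1) (by linarith)
  field_simp
  linear_combination h2



lemma quantile_agg_le {n : ℕ} {p α : ℝ} (hp0 : 0 < p) (hp1 : p < 1) (hα : 1 < α)
    {θ : Fin n → ℝ} (hθ : ∀ i, 0 < θ i) {G : Measure ℝ}
    (hG : G ∈ aggSet n (fun i => pareto α (θ i))) :
    quantile G p ≤ α / (α - 1) * ((∑ i, θ i) / (1 - p) ^ (1/α)) := by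
  obtain ⟨μ, hμ, hmarg, rfl⟩ := hG
  have hα0 : 0 < α := by linarith
  have hα1 : 0 < α - 1 := by linarith
  have h1p : 0 < 1 - p := by linarith
  set q := (1 - p) ^ (1/α) with hq
  have hq0 : 0 < q := Real.rpow_pos_of_pos h1p _
  have hq1 : q ≤ 1 := Real.rpow_le_one h1p.le (by linarith) (by positivity)
  set Θ := ∑ i, θ i with hΘdef
  have hΘ0 : 0 ≤ Θ := Finset.sum_nonneg fun i _ => (hθ i).le
  set B := α / (α - 1) * (Θ / q) with hB
  have hB0 : 0 ≤ B :=
    mul_nonneg (div_nonneg hα0.le hα1.le) (div_nonneg hΘ0 hq0.le)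
  have hf : Measurable (fun x : Fin n → ℝ => ∑ i, x i) :=
    Finset.univ.measurable_sum fun i _ => measurable_pi_apply i
  apply quantile_le_of_cdf hB0
  rcases Nat.eq_zero_or_pos n with hn | hn
  · subst hn
    have hfc : (fun x : Fin 0 → ℝ => ∑ i, x i) = fun _ => (0:ℝ) := by funext x; simp
    rw [hfc, Measure.map_const, measure_univ, one_smul,
      Measure.dirac_apply' _ measurableSet_Iic,
      Set.indicator_of_mem (Set.mem_Iic.2 hB0)]
    simp; linarith
  · have hΘpos : 0 < Θ := Finset.sum_pos (fun i _ => hθ i) ⟨⟨0, hn⟩, Finset.mem_univ _⟩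
    set T := Θ / q with hT
    set D := T / (α - 1) with hD
    have hT0 : 0 < T := div_pos hΘpos hq0
    have hD0 : 0 < D := div_pos hT0 hα1
    have hBTD : B = T + D := by
      rw [hB, hD, hT]; field_simp; ring
    have hmt : ∀ i, θ i ≤ θ i / q := fun i => by
      rw [le_div_iff₀ hq0]; nlinarith [hθ i]
    have key : ∀ i, (∫⁻ x, ENNReal.ofReal (max (x i - θ i / q) 0) ∂μ)
        = ENNReal.ofReal (θ i * (1 - p) / (q * (α - 1))) := by
      intro i
      have e1 : ∫⁻ x, ENNReal.ofReal (max (x i - θ i / q) 0) ∂μ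
          = ∫⁻ y, ENNReal.ofReal (max (y - θ i / q) 0) ∂(μ.map (fun x => x i)) :=
        (lintegral_map (f := fun y => ENNReal.ofReal (max (y - θ i / q) 0))
          (((measurable_id.sub_const _).max measurable_const).ennreal_ofReal)
          (measurable_pi_apply i)).symm
      rw [e1, hmarg i, pareto_stoploss hα (hθ i) (hmt i), c_eq hα (hθ i) hp0 hp1]
    have hTsum : T = ∑ i, θ i / q := by rw [hT, Finset.sum_div]
    have step1 : ∫⁻ x, ENNReal.ofReal (max ((∑ i, x i) - T) 0) ∂μ
        ≤ ENNReal.ofReal ((1 - p) * D) := by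
      have pw : ∀ x : Fin n → ℝ, ENNReal.ofReal (max ((∑ i, x i) - T) 0)
          ≤ ∑ i, ENNReal.ofReal (max (x i - θ i / q) 0) := by
        intro x
        have hsub : (∑ i, x i) - T = ∑ i, (x i - θ i / q) := by
          rw [hTsum, Finset.sum_sub_distrib]
        calc ENNReal.ofReal (max ((∑ i, x i) - T) 0)
            ≤ ENNReal.ofReal (∑ i, max (x i - θ i / q) 0) := by
              apply ENNReal.ofReal_le_ofReal
              apply max_le
              · rw [hsub]; exact Finset.sum_le_sum fun i _ => le_max_left _ _
              · exact Finset.sum_nonneg fun i _ => le_max_right _ _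
          _ = ∑ i, ENNReal.ofReal (max (x i - θ i / q) 0) :=
              ENNReal.ofReal_sum_of_nonneg fun i _ => le_max_right _ _
      calc ∫⁻ x, ENNReal.ofReal (max ((∑ i, x i) - T) 0) ∂μ
          ≤ ∫⁻ x, ∑ i, ENNReal.ofReal (max (x i - θ i / q) 0) ∂μ := lintegral_mono pw
        _ = ∑ i, ∫⁻ x, ENNReal.ofReal (max (x i - θ i / q) 0) ∂μ :=
            lintegral_finset_sum _ fun i _ =>
              (((measurable_pi_apply i).sub_const _).max measurable_const).ennreal_ofReal
        _ = ∑ i, ENNReal.ofReal (θ i * (1 - p) / (q * (α - 1))) := by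
            exact Finset.sum_congr rfl fun i _ => key i
        _ = ENNReal.ofReal (∑ i, θ i * (1 - p) / (q * (α - 1))) :=
            (ENNReal.ofReal_sum_of_nonneg fun i _ =>
              div_nonneg (mul_nonneg (hθ i).le h1p.le) (mul_nonneg hq0.le hα1.le)).symm
        _ = ENNReal.ofReal ((1 - p) * D) := by
            congr 1
            rw [← Finset.sum_div, ← Finset.sum_mul, hD, hT]
            field_simp; ring
    set A := (fun x : Fin n → ℝ => ∑ i, x i) ⁻¹' Set.Ioi B with hA
    have hAm : MeasurableSet A := hf measurableSet_Ioi
    have step2 : ENNReal.ofReal D * μ A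
        ≤ ∫⁻ x, ENNReal.ofReal (max ((∑ i, x i) - T) 0) ∂μ := by
      rw [← setLIntegral_const A (ENNReal.ofReal D)]
      calc ∫⁻ _ in A, ENNReal.ofReal D ∂μ
          ≤ ∫⁻ x in A, ENNReal.ofReal (max ((∑ i, x i) - T) 0) ∂μ := by
            apply setLIntegral_mono ((hf.sub_const T).max measurable_const).ennreal_ofReal
            intro x hx
            apply ENNReal.ofReal_le_ofReal
            have hx' : B < ∑ i, x i := hx
            have h1 : D ≤ (∑ i, x i) - T := by rw [hBTD] at hx'; linarith
            exact h1.trans (le_max_left _ _)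
        _ ≤ _ := setLIntegral_le_lintegral _ _
    have hμA : μ A ≤ ENNReal.ofReal (1 - p) := by
      have h := step2.trans step1
      rw [ENNReal.ofReal_mul h1p.le, mul_comm (ENNReal.ofReal (1 - p)) _] at h
      exact (ENNReal.mul_le_mul_iff_right (ENNReal.ofReal_pos.2 hD0).ne' ENNReal.ofReal_ne_top).mp h
    rw [Measure.map_apply hf measurableSet_Iic]
    have hcompl : (fun x : Fin n → ℝ => ∑ i, x i) ⁻¹' Set.Iic B = Aᶜ := by
      rw [hA, ← Set.preimage_compl, Set.compl_Ioi]
    rw [hcompl, measure_compl hAm (measure_ne_top μ _), measure_univ]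
    have h1 : ENNReal.ofReal p ≤ 1 - μ A := by
      have e : ENNReal.ofReal p = 1 - ENNReal.ofReal (1 - p) := by
        rw [← ENNReal.ofReal_one, ← ENNReal.ofReal_sub _ h1p.le]; norm_num
      rw [e]
      exact tsub_le_tsub_left hμA 1
    have hne : (1 : ℝ≥0∞) - μ A ≠ ⊤ := (tsub_le_self.trans_lt ENNReal.one_lt_top).ne
    have h2 := ENNReal.toReal_mono hne h1
    rwa [ENNReal.toReal_ofReal hp0.le] at h2

end auxstmt19

/-- Proposition A.1(v): bounds on the worst-case VaR for Pareto marginals, α > 1. -/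
theorem stmt19 (n : ℕ) (p : ℝ) (hp : p ∈ Set.Ioo (0 : ℝ) 1)
    (α : ℝ) (hα : 1 < α) (θ : Fin n → ℝ) (hθ : ∀ i, 0 < θ i) :
    (((∑ i, θ i) / (1 - p) ^ (1 / α) : ℝ) : EReal) ≤
        worstVaR p n (fun i => pareto α (θ i)) ∧
      worstVaR p n (fun i => pareto α (θ i)) ≤
        ((α / (α - 1) * ((∑ i, θ i) / (1 - p) ^ (1 / α)) : ℝ) : EReal) := by
  obtain ⟨hp0, hp1⟩ := hp
  constructor
  · -- lower bound
    rcases Nat.eq_zero_or_pos n with hn | hn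
    · subst hn
      have hL : ((∑ i : Fin 0, θ i) / (1 - p) ^ (1 / α) : ℝ) = 0 := by simp
      rw [hL]
      set μ0 : Measure (Fin 0 → ℝ) := Measure.dirac (fun _ => (0 : ℝ)) with hμ0
      have hmem : μ0.map (fun x => ∑ i, x i) ∈ aggSet 0 (fun i => pareto α (θ i)) :=
        ⟨μ0, by rw [hμ0]; infer_instance, fun i => i.elim0, rfl⟩
      have hd : ∀ x : ℝ, (Measure.dirac (0 : ℝ)) (Set.Iic x)
          = if (0 : ℝ) ∈ Set.Iic x then 1 else 0 := fun x => by
        rw [Measure.dirac_apply' _ measurableSet_Iic, Set.indicator_apply]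
        simp
      have hmap : μ0.map (fun x => ∑ i, x i) = Measure.dirac (0 : ℝ) := by
        have hfc : (fun x : Fin 0 → ℝ => ∑ i, x i) = fun _ => (0 : ℝ) := by
          funext x; simp
        rw [hfc, hμ0, Measure.map_const, measure_univ, one_smul]
      have hquant : (0 : ℝ) ≤ quantile (μ0.map (fun x => ∑ i, x i)) p := by
        rw [hmap, quantile]
        refine le_csInf ⟨0, ?_⟩ fun x hx => ?_
        · simp only [Set.mem_setOf_eq, hd 0, if_pos (Set.mem_Iic.2 le_rfl),
            ENNReal.toReal_one]
          linarith
        · simp only [Set.mem_setOf_eq] at hx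
          by_contra h
          push_neg at h
          rw [hd x, if_neg (by simp only [Set.mem_Iic]; linarith)] at hx
          simp only [ENNReal.toReal_zero] at hx
          linarith
      calc ((0 : ℝ) : EReal) ≤ ((quantile (μ0.map (fun x => ∑ i, x i)) p : ℝ) : EReal) :=
            EReal.coe_le_coe_iff.2 hquant
        _ ≤ worstVaR p 0 (fun i => pareto α (θ i)) := le_sSup ⟨_, hmem, rfl⟩
    · have hα0 : 0 < α := by linarith
      have hΘpos : 0 < ∑ i, θ i :=
        Finset.sum_pos (fun i _ => hθ i) ⟨⟨0, hn⟩, Finset.mem_univ _⟩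
      set C : ℝ → (Fin n → ℝ) := fun u => fun i => θ i / (1 - u) ^ α⁻¹ with hCdef
      have hC : Measurable C := measurable_pi_lambda _ fun i => g_measurable α (θ i)
      set μco : Measure (Fin n → ℝ) := uniform01.map C with hμco
      have hμcoP : IsProbabilityMeasure μco := by
        rw [hμco]; exact Measure.isProbabilityMeasure_map hC.aemeasurable
      have hf : Measurable (fun x : Fin n → ℝ => ∑ i, x i) :=
        Finset.univ.measurable_sum fun i _ => measurable_pi_apply i
      have hmarg : ∀ i, μco.map (fun x => x i) = pareto α (θ i) := by
        intro i
        rw [hμco, Measure.map_map (measurable_pi_apply i) hC]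
        exact map_g_eq_pareto hα (hθ i)
      have hsum : μco.map (fun x => ∑ i, x i) = pareto α (∑ i, θ i) := by
        rw [hμco, Measure.map_map hf hC]
        have hcomp : ((fun x : Fin n → ℝ => ∑ i, x i) ∘ C)
            = fun u => (∑ i, θ i) / (1 - u) ^ α⁻¹ := by
          funext u
          simp only [Function.comp_apply, hCdef]
          rw [Finset.sum_div]
        rw [hcomp]
        exact map_g_eq_pareto hα hΘpos
      have hmem : μco.map (fun x => ∑ i, x i) ∈ aggSet n (fun i => pareto α (θ i)) :=
        ⟨μco, hμcoP, hmarg, rfl⟩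
      calc (((∑ i, θ i) / (1 - p) ^ (1 / α) : ℝ) : EReal)
          ≤ ((quantile (μco.map (fun x => ∑ i, x i)) p : ℝ) : EReal) := by
            apply EReal.coe_le_coe_iff.2
            rw [hsum]
            exact quantile_pareto_ge hα hΘpos ⟨hp0, hp1⟩
        _ ≤ worstVaR p n (fun i => pareto α (θ i)) := le_sSup ⟨_, hmem, rfl⟩
  · -- upper bound
    apply sSup_le
    rintro x ⟨G, hG, rfl⟩
    exact EReal.coe_le_coe_iff.2 (quantile_agg_le hp0 hp1 hα hθ hG)

end
end
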